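/- arXiv:2202.12232 — 9 statements merged into one kernel-verified Lean document; each statement's English description precedes it below -/
import Mathlib

section
/- Let ε ≥ 0, let π ∈ (0,1) be the prior probability that a target point is in the training set, and let p, q > 0 be real numbers satisfying the ε-differential-privacy ratio conditions p ≤ e^ε · q and q ≤ e^ε · p (p and q represent the probabilities that the trained model lands in the adversary's acceptance set when the point is, respectively is not, in the training set). Then the posterior (positive accuracy of the membership-inference attack) satisfies π·p / (π·p + (1−π)·q) ≤ (1 + e^{−ε}·(1−π)/π)⁻¹. -/
/-- Upper-bound half of the main theorem: under ε-DP, the positive accuracy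
(posterior via Bayes' rule) of any membership-inference attack is bounded above. -/
theorem mi_positive_accuracy_upper_bound
    (ε pr p q : ℝ) (hε : 0 ≤ ε) (hpr0 : 0 < pr) (hpr1 : pr < 1)
    (hp : 0 < p) (hq : 0 < q)
    (hdp1 : p ≤ Real.exp ε * q) (hdp2 : q ≤ Real.exp ε * p) :
    pr * p / (pr * p + (1 - pr) * q) ≤ (1 + Real.exp (-ε) * (1 - pr) / pr)⁻¹ := by
  have h1pr : 0 < 1 - pr := by linarith
  have he : 0 < Real.exp (-ε) := Real.exp_pos _
  have hkey : Real.exp (-ε) * p ≤ q := by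
    have := mul_le_mul_of_nonneg_left hdp1 he.le
    rwa [← mul_assoc, ← Real.exp_add, neg_add_cancel, Real.exp_zero, one_mul] at this
  have hd1 : 0 < pr * p + (1 - pr) * q := by positivity
  have hd2 : 0 < 1 + Real.exp (-ε) * (1 - pr) / pr := by positivity
  rw [div_le_iff₀ hd1, inv_mul_eq_div, le_div_iff₀ hd2]
  have : Real.exp (-ε) * (1 - pr) / pr * (pr * p) = Real.exp (-ε) * p * (1 - pr) := by
    field_simp
  nlinarith [mul_le_mul_of_nonneg_right hkey h1pr.le]
end

section
/- Let ε ≥ 0, let π ∈ (0,1), and let p, q > 0 be real numbers satisfying p ≤ e^ε · q and q ≤ e^ε · p. Then π·p / (π·p + (1−π)·q) ≥ (1 + e^{ε}·(1−π)/π)⁻¹. -/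
/-- Lower-bound half of the main theorem: under ε-DP, the positive accuracy
(posterior via Bayes' rule) of any membership-inference attack is bounded below. -/
theorem mi_positive_accuracy_lower_bound
    (ε pr p q : ℝ) (hε : 0 ≤ ε) (hpr0 : 0 < pr) (hpr1 : pr < 1)
    (hp : 0 < p) (hq : 0 < q)
    (hdp1 : p ≤ Real.exp ε * q) (hdp2 : q ≤ Real.exp ε * p) :
    pr * p / (pr * p + (1 - pr) * q) ≥ (1 + Real.exp ε * (1 - pr) / pr)⁻¹ := by
  have h1 : 0 < 1 - pr := by linarith
  have hden : 0 < pr * p + (1 - pr) * q := by positivity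
  have hden2 : 0 < 1 + Real.exp ε * (1 - pr) / pr := by positivity
  rw [ge_iff_le, inv_le_iff_one_le_mul₀ hden2, div_mul_eq_mul_div, le_div_iff₀ hden]
  have := Real.exp_pos ε
  have h2 : pr * p * (Real.exp ε * (1 - pr) / pr) = p * (Real.exp ε * (1 - pr)) := by
    field_simp
  nlinarith [mul_le_mul_of_nonneg_left hdp2 (le_of_lt h1), Real.exp_pos ε]
end

section
/- Let ε ≥ 0 and let p, q > 0 be real numbers satisfying p ≤ e^ε · q and q ≤ e^ε · p. Then (1 + e^{ε})⁻¹ ≤ p/(p + q) ≤ (1 + e^{−ε})⁻¹. In particular, when the sampling probability is 1/2, the overall accuracy of any membership-inference attack against an ε-DP training algorithm lies between (1 + e^{ε})⁻¹ and (1 + e^{−ε})⁻¹. -/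
/-- Specialization to sampling probability 1/2: the overall accuracy of any
membership-inference attack against an ε-DP algorithm lies between
(1 + e^ε)⁻¹ and (1 + e^{-ε})⁻¹. -/
theorem mi_accuracy_bounds_half_prior
    (ε p q : ℝ) (hε : 0 ≤ ε) (hp : 0 < p) (hq : 0 < q)
    (hdp1 : p ≤ Real.exp ε * q) (hdp2 : q ≤ Real.exp ε * p) :
    (1 + Real.exp ε)⁻¹ ≤ p / (p + q) ∧ p / (p + q) ≤ (1 + Real.exp (-ε))⁻¹ := by
  have hpq : 0 < p + q := by linarith
  have he : 0 < Real.exp ε := Real.exp_pos ε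
  have hne : 0 < Real.exp (-ε) := Real.exp_pos (-ε)
  have hmul : Real.exp (-ε) * Real.exp ε = 1 := by
    rw [← Real.exp_add]; simp
  constructor
  · rw [inv_eq_one_div, div_le_div_iff₀ (by linarith) hpq]
    nlinarith
  · rw [inv_eq_one_div, div_le_div_iff₀ hpq (by linarith)]
    nlinarith
end

section
/- Let ε ≥ 0, π ∈ (0,1), and let p, q > 0 satisfy p ≤ e^ε·q and q ≤ e^ε·p. Then the positive membership advantage 2·(π·p/(π·p + (1−π)·q) − π) is at most 2·((1 + e^{−ε}·(1−π)/π)⁻¹ − π). -/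
/-- Bound on the positive membership advantage: under ε-DP the advantage
2·(positive accuracy − π) is at most 2·((1 + e^{-ε}(1-π)/π)⁻¹ − π). -/
theorem mi_positive_advantage_bound
    (ε pr p q : ℝ) (hε : 0 ≤ ε) (hpr0 : 0 < pr) (hpr1 : pr < 1)
    (hp : 0 < p) (hq : 0 < q)
    (hdp1 : p ≤ Real.exp ε * q) (hdp2 : q ≤ Real.exp ε * p) :
    2 * (pr * p / (pr * p + (1 - pr) * q) - pr)
      ≤ 2 * ((1 + Real.exp (-ε) * (1 - pr) / pr)⁻¹ - pr) := by
  have h1 : 0 < 1 - pr := by linarith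
  have he : 0 < Real.exp (-ε) := Real.exp_pos _
  have hkey : Real.exp (-ε) * p ≤ q := by
    rw [Real.exp_neg]
    rw [inv_mul_le_iff₀ (Real.exp_pos ε)]
    linarith
  have hd1 : 0 < pr * p + (1 - pr) * q := by positivity
  have hd2 : 0 < 1 + Real.exp (-ε) * (1 - pr) / pr := by positivity
  have main : pr * p / (pr * p + (1 - pr) * q)
      ≤ (1 + Real.exp (-ε) * (1 - pr) / pr)⁻¹ := by
    rw [div_le_iff₀ hd1, ← one_div, div_mul_eq_mul_div, le_div_iff₀ hd2]
    have := mul_le_mul_of_nonneg_left hkey (le_of_lt (mul_pos hp h1))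
    field_simp
    nlinarith [mul_pos hp h1, mul_pos hpr0 hd1]
  linarith
end

section
/- Fix ε > 0 and let h(π) = 2·((1 + e^{−ε}·(1−π)/π)⁻¹ − π) for π ∈ (0,1) be the upper bound on positive membership advantage. Then h attains its maximum over (0,1) at π* = (1 + e^{ε/2})⁻¹; that is, h(π) ≤ h((1 + e^{ε/2})⁻¹) for all π ∈ (0,1). In particular, for ε > 0 the maximizing prior π* is strictly less than 1/2. -/
/-- The upper bound on positive membership advantage, as a function of the
prior π, is maximized at π* = (1 + e^{ε/2})⁻¹, which is strictly below 1/2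
for ε > 0. -/
theorem advantage_bound_maximizer (ε : ℝ) (hε : 0 < ε) :
    (∀ pr ∈ Set.Ioo (0 : ℝ) 1,
        2 * ((1 + Real.exp (-ε) * (1 - pr) / pr)⁻¹ - pr)
          ≤ 2 * ((1 + Real.exp (-ε) * (1 - (1 + Real.exp (ε / 2))⁻¹) /
                    (1 + Real.exp (ε / 2))⁻¹)⁻¹ - (1 + Real.exp (ε / 2))⁻¹)) ∧
      (1 + Real.exp (ε / 2))⁻¹ < 1 / 2 := by
  set E := Real.exp (ε / 2) with hEdef
  have hE1 : 1 < E := by rw [hEdef]; exact Real.one_lt_exp_iff.mpr (by positivity)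
  have hE0 : 0 < E := lt_trans one_pos hE1
  have ha : Real.exp (-ε) = (E ^ 2)⁻¹ := by
    rw [Real.exp_neg, hEdef, pow_two, ← Real.exp_add]
    norm_num
  have hE1p : (0:ℝ) < 1 + E := by linarith
  -- value at the maximizer
  have hq : (1 + Real.exp (-ε) * (1 - (1 + E)⁻¹) / (1 + E)⁻¹)⁻¹ - (1 + E)⁻¹
      = (E - 1) / (E + 1) := by
    rw [ha]
    field_simp
    rw [show 1 + E - 1 = E by ring]
    field_simp
    ring
  constructor
  · intro p hp
    obtain ⟨hp0, hp1⟩ := hp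
    rw [hq]
    have hD : (0:ℝ) < E ^ 2 * p + (1 - p) := by nlinarith
    have hL : (1 + Real.exp (-ε) * (1 - p) / p)⁻¹
        = E ^ 2 * p / (E ^ 2 * p + (1 - p)) := by
      rw [ha]
      field_simp
    rw [hL]
    have hrepr : 2 * ((E - 1) / (E + 1)) - 2 * (E ^ 2 * p / (E ^ 2 * p + (1 - p)) - p)
        = 2 * (E - 1) * (E * p - (1 - p)) ^ 2 / ((E + 1) * (E ^ 2 * p + (1 - p))) := by
      field_simp
      ring
    nlinarith [div_nonneg (by nlinarith [sq_nonneg (E * p - (1 - p))] : (0:ℝ) ≤ 2 * (E - 1) * (E * p - (1 - p)) ^ 2)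
      (le_of_lt (by positivity : (0:ℝ) < (E + 1) * (E ^ 2 * p + (1 - p))))]
  · rw [one_div, inv_lt_inv₀ hE1p (by norm_num)]
    linarith
end

section
/- Let v > 0 and let m₁ > m₂ be real numbers. Let μ₁ = gaussianReal m₁ v and μ₂ = gaussianReal m₂ v be the Gaussian measures with means m₁ and m₂ and variance v. Then the function α ↦ μ₂((−∞, α]) / (μ₁((−∞, α]) + μ₂((−∞, α])) (with the measures evaluated as real numbers) tends to 1 as α → −∞. -/
open ProbabilityTheory MeasureTheory Filter

private lemma gauss_Iic_toReal (m : ℝ) {v : NNReal} (hv : v ≠ 0) (α : ℝ) :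
    ((gaussianReal m v) (Set.Iic α)).toReal
      = ∫ x in Set.Iic α, gaussianPDFReal m v x := by
  rw [gaussianReal_apply_eq_integral m hv, ENNReal.toReal_ofReal]
  exact setIntegral_nonneg measurableSet_Iic fun x _ => gaussianPDFReal_nonneg m v x

private lemma gauss_Iic_pos (m : ℝ) {v : NNReal} (hv : v ≠ 0) (α : ℝ) :
    0 < ((gaussianReal m v) (Set.Iic α)).toReal := by
  rw [gauss_Iic_toReal m hv]
  rw [setIntegral_pos_iff_support_of_nonneg_ae
    (ae_of_all _ fun x => gaussianPDFReal_nonneg m v x)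
    ((integrable_gaussianPDFReal m v).restrict)]
  have : Function.support (gaussianPDFReal m v) = Set.univ := by
    ext x
    simp [Function.mem_support, (gaussianPDFReal_pos m v x hv).ne']
  rw [this, Set.univ_inter]
  simp [Real.volume_Iic]

/-- As the threshold α → −∞, the positive accuracy of the Gaussian
thresholding attack, Φ₂(α)/(Φ₁(α)+Φ₂(α)) with means m₁ > m₂ and common
variance v, tends to 1. -/
theorem gaussian_threshold_pos_acc_tendsto_one
    (v : NNReal) (hv : 0 < v) (m₁ m₂ : ℝ) (hm : m₁ > m₂) :
    Tendsto
      (fun α : ℝ =>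
        ((gaussianReal m₂ v) (Set.Iic α)).toReal /
          (((gaussianReal m₁ v) (Set.Iic α)).toReal +
            ((gaussianReal m₂ v) (Set.Iic α)).toReal))
      atBot (nhds 1) := by
  have hv' : v ≠ 0 := hv.ne'
  have hvpos : (0 : ℝ) < (v : ℝ) := hv
  set F₁ : ℝ → ℝ := fun α => ((gaussianReal m₁ v) (Set.Iic α)).toReal with hF₁
  set F₂ : ℝ → ℝ := fun α => ((gaussianReal m₂ v) (Set.Iic α)).toReal with hF₂
  have h₁pos : ∀ α, 0 < F₁ α := fun α => gauss_Iic_pos m₁ hv' α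
  have h₂pos : ∀ α, 0 < F₂ α := fun α => gauss_Iic_pos m₂ hv' α
  set r : ℝ → ℝ := fun α =>
    Real.exp ((m₁ - m₂) * (2 * α - m₁ - m₂) / (2 * v)) with hr
  -- key bound: F₁ α ≤ r α * F₂ α
  have hbound : ∀ α, F₁ α ≤ r α * F₂ α := by
    intro α
    have hpt : ∀ x ∈ Set.Iic α,
        gaussianPDFReal m₁ v x ≤ r α * gaussianPDFReal m₂ v x := by
      intro x hx
      simp only [Set.mem_Iic] at hx
      unfold gaussianPDFReal
      simp only [hr]
      have hc : (0:ℝ) ≤ (√(2 * Real.pi * (v:ℝ)))⁻¹ := by positivity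
      have hexp : Real.exp (-(x - m₁) ^ 2 / (2 * (v:ℝ))) ≤
          Real.exp (-(x - m₂) ^ 2 / (2 * (v:ℝ))) *
            Real.exp ((m₁ - m₂) * (2 * α - m₁ - m₂) / (2 * (v:ℝ))) := by
        rw [← Real.exp_add, Real.exp_le_exp, ← add_div,
          div_le_div_iff_of_pos_right (by positivity)]
        nlinarith
      exact le_trans (mul_le_mul_of_nonneg_left hexp hc) (le_of_eq (by ring))
    have h1 : F₁ α = ∫ x in Set.Iic α, gaussianPDFReal m₁ v x :=
      gauss_Iic_toReal m₁ hv' α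
    have h2 : F₂ α = ∫ x in Set.Iic α, gaussianPDFReal m₂ v x :=
      gauss_Iic_toReal m₂ hv' α
    rw [h1, h2, ← integral_const_mul]
    exact setIntegral_mono_on ((integrable_gaussianPDFReal m₁ v).restrict)
      (((integrable_gaussianPDFReal m₂ v).const_mul _).restrict)
      measurableSet_Iic hpt
  -- r tends to 0 at -∞
  have hrtend : Tendsto r atBot (nhds 0) := by
    apply Real.tendsto_exp_atBot.comp
    have : (fun α : ℝ => (m₁ - m₂) * (2 * α - m₁ - m₂) / (2 * v))
        = fun α : ℝ => ((m₁ - m₂) / v) * α + (-((m₁ - m₂) * (m₁ + m₂)) / (2 * v)) := by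
      funext α; field_simp; ring
    rw [this]
    apply tendsto_atBot_add_const_right
    exact Tendsto.const_mul_atBot (div_pos (by linarith) hvpos) tendsto_id
  -- ratio F₁/F₂ tends to 0
  have hratio : Tendsto (fun α => F₁ α / F₂ α) atBot (nhds 0) := by
    refine tendsto_of_tendsto_of_tendsto_of_le_of_le tendsto_const_nhds hrtend
      (fun α => div_nonneg (h₁pos α).le (h₂pos α).le) ?_
    intro α
    rw [div_le_iff₀ (h₂pos α)]
    exact hbound α
  have key : Tendsto (fun α => 1 / (F₁ α / F₂ α + 1)) atBot (nhds 1) := by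
    have h01 : Tendsto (fun α => F₁ α / F₂ α + 1) atBot (nhds 1) := by
      simpa using hratio.add (tendsto_const_nhds (x := (1 : ℝ)))
    simpa [one_div] using h01.inv₀ (by norm_num)
  refine key.congr fun α => ?_
  have h2 := h₂pos α
  have h1 := h₁pos α
  show 1 / (F₁ α / F₂ α + 1) = F₂ α / (F₁ α + F₂ α)
  field_simp
end

section
/- Let v > 0 and m₁ > m₂, let μ₁ = gaussianReal m₁ v and μ₂ = gaussianReal m₂ v, and define g(α) = μ₂((−∞, α]) / (μ₁((−∞, α]) + μ₂((−∞, α])) (measures evaluated as real numbers). Then for every m ∈ [0, 1) there exists a threshold α ∈ ℝ such that g(α) > m. In other words, the positive accuracy of the Gaussian thresholding membership-inference attack is not bounded away from 1. -/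
open ProbabilityTheory MeasureTheory Real

/-- The positive accuracy of the Gaussian thresholding attack is not bounded
away from 1: for every m ∈ [0,1) some threshold achieves accuracy > m. -/
theorem gaussian_threshold_pos_acc_unbounded
    (v : NNReal) (hv : 0 < v) (m₁ m₂ : ℝ) (hm : m₁ > m₂) :
    ∀ m ∈ Set.Ico (0 : ℝ) 1, ∃ α : ℝ,
      ((gaussianReal m₂ v) (Set.Iic α)).toReal /
          (((gaussianReal m₁ v) (Set.Iic α)).toReal +
            ((gaussianReal m₂ v) (Set.Iic α)).toReal) > m := by
  rintro m ⟨hm0, hm1⟩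
  have hv' : (0 : ℝ) < (v : ℝ) := hv
  have hvne : v ≠ 0 := hv.ne'
  set d : ℝ := m₁ - m₂ with hd
  have hd0 : 0 < d := sub_pos.mpr hm
  set c : ℝ := (1 - m) / (m + 1) with hc
  have hc0 : 0 < c := div_pos (by linarith) (by linarith)
  set α : ℝ := (m₁ + m₂) / 2 + (v : ℝ) * Real.log c / d with hα
  refine ⟨α, ?_⟩
  -- Define the integrals
  set A : ℝ := ∫ x in Set.Iic α, gaussianPDFReal m₁ v x with hA
  set B : ℝ := ∫ x in Set.Iic α, gaussianPDFReal m₂ v x with hB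
  have hAnn : 0 ≤ A := setIntegral_nonneg measurableSet_Iic
    (fun x _ => gaussianPDFReal_nonneg m₁ v x)
  have hInt1 : IntegrableOn (gaussianPDFReal m₁ v) (Set.Iic α) :=
    (integrable_gaussianPDFReal m₁ v).integrableOn
  have hInt2 : IntegrableOn (gaussianPDFReal m₂ v) (Set.Iic α) :=
    (integrable_gaussianPDFReal m₂ v).integrableOn
  -- B is positive
  have hBpos : 0 < B := by
    rw [hB, setIntegral_pos_iff_support_of_nonneg_ae
      (ae_of_all _ (fun x => gaussianPDFReal_nonneg m₂ v x)) hInt2]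
    have hsupp : Function.support (gaussianPDFReal m₂ v) = Set.univ := by
      ext x
      simp [Function.mem_support, (gaussianPDFReal_pos m₂ v x hvne).ne']
    rw [hsupp, Set.univ_inter]
    simp [Real.volume_Iic]
  -- pointwise bound : f₁ x ≤ c * f₂ x on Iic α
  have hptwise : ∀ x ∈ Set.Iic α, gaussianPDFReal m₁ v x ≤ c * gaussianPDFReal m₂ v x := by
    intro x hx
    simp only [Set.mem_Iic] at hx
    rw [gaussianPDFReal, gaussianPDFReal]
    rw [mul_left_comm]
    have hsqrt : (0:ℝ) ≤ (√(2 * π * (v:ℝ)))⁻¹ := by positivity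
    refine mul_le_mul_of_nonneg_left ?_ (by positivity)
    have hcexp : c = Real.exp (Real.log c) := (Real.exp_log hc0).symm
    rw [hcexp, ← Real.exp_add, Real.exp_le_exp]
    have hαx : d * (2 * x - m₁ - m₂) / (2 * v) ≤ d * (2 * α - m₁ - m₂) / (2 * v) := by
      apply div_le_div_of_nonneg_right _ (by positivity)
      nlinarith
    have hkey : - (x - m₁)^2 / (2 * v) - (- (x - m₂)^2 / (2 * v))
        = d * (2 * x - m₁ - m₂) / (2 * v) := by
      field_simp
      ring
    have hαval : d * (2 * α - m₁ - m₂) / (2 * v) = Real.log c := by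
      rw [hα]
      field_simp
      ring
    rw [hαval] at hαx
    linarith [hkey ▸ hαx]
  have hAB : A ≤ c * B := by
    rw [hA, hB, ← integral_const_mul]
    exact setIntegral_mono_on hInt1 (hInt2.const_mul c) measurableSet_Iic hptwise
  -- rewrite the measures
  have hμ1 : ((gaussianReal m₁ v) (Set.Iic α)).toReal = A := by
    rw [gaussianReal_apply_eq_integral _ hvne, ENNReal.toReal_ofReal hAnn]
  have hμ2 : ((gaussianReal m₂ v) (Set.Iic α)).toReal = B := by
    rw [gaussianReal_apply_eq_integral _ hvne, ENNReal.toReal_ofReal hBpos.le]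
  rw [hμ1, hμ2]
  rw [gt_iff_lt, lt_div_iff₀ (by linarith)]
  -- m * (A + B) < B;  m * A ≤ m * c * B and m*c + m < 1 ... need m*c*B + m*B < B
  have hmc : m * c < 1 - m := by
    rw [hc, mul_div_assoc', div_lt_iff₀ (by linarith : (0:ℝ) < m + 1)]
    nlinarith
  have : m * A ≤ m * c * B := by
    rw [mul_assoc]
    exact mul_le_mul_of_nonneg_left hAB hm0
  nlinarith
end

section
/- Let v > 0, c > 0, and m ∈ ℝ. Let μ₁ = gaussianReal m v and μ₂ = gaussianReal (m − c) v. Then for every α ∈ ℝ, (1 − μ₁((−∞, α]))/2 + μ₂((−∞, α])/2 ≤ (gaussianReal 0 v)((−∞, c/2]) (with all measures evaluated as real numbers), with equality when α = m − c/2. -/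
open ProbabilityTheory MeasureTheory

section Aux

variable (v : NNReal)

private lemma g_even (x : ℝ) : gaussianPDFReal 0 v (-x) = gaussianPDFReal 0 v x := by
  simp [gaussianPDFReal, neg_sq]

private lemma g_mono (hv : 0 < (v : ℝ)) {x y : ℝ} (h : x ^ 2 ≤ y ^ 2) :
    gaussianPDFReal 0 v y ≤ gaussianPDFReal 0 v x := by
  unfold gaussianPDFReal
  have h2v : (0:ℝ) < 2 * v := by positivity
  apply mul_le_mul_of_nonneg_left _ (by positivity)
  apply Real.exp_le_exp.mpr
  rw [div_le_div_iff₀ h2v h2v]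
  nlinarith

private lemma key_nonneg (hv : 0 < (v : ℝ)) {h t : ℝ} (hh : 0 < h) (ht : 0 ≤ t) :
    ∫ x in (t - h)..(t + h), gaussianPDFReal 0 v x
      ≤ ∫ x in (-h)..h, gaussianPDFReal 0 v x := by
  set g := gaussianPDFReal 0 v with hg
  have hgint : Integrable g := integrable_gaussianPDFReal 0 v
  have hii : ∀ a b : ℝ, IntervalIntegrable g volume a b := fun a b => hgint.intervalIntegrable
  have h1 : (∫ x in (-h)..(t - h), g x) + ∫ x in (t - h)..(t + h), g x
      = ∫ x in (-h)..(t + h), g x :=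
    intervalIntegral.integral_add_adjacent_intervals (hii _ _) (hii _ _)
  have h2 : (∫ x in (-h)..h, g x) + ∫ x in h..(t + h), g x
      = ∫ x in (-h)..(t + h), g x :=
    intervalIntegral.integral_add_adjacent_intervals (hii _ _) (hii _ _)
  have h3 : (∫ x in h..(t + h), g x) = ∫ x in (-h)..(t - h), g (x + 2 * h) := by
    rw [intervalIntegral.integral_comp_add_right (f := g) (2 * h)]
    ring_nf
  have h4 : (∫ x in (-h)..(t - h), g (x + 2 * h)) ≤ ∫ x in (-h)..(t - h), g x := by
    apply intervalIntegral.integral_mono_on (by linarith)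
      (hgint.comp_add_right (2 * h)).intervalIntegrable (hii _ _)
    intro x hx
    have hx1 : -h ≤ x := hx.1
    apply g_mono v hv
    nlinarith
  linarith

private lemma key (hv : 0 < (v : ℝ)) {h : ℝ} (hh : 0 < h) (t : ℝ) :
    ∫ x in (t - h)..(t + h), gaussianPDFReal 0 v x
      ≤ ∫ x in (-h)..h, gaussianPDFReal 0 v x := by
  rcases le_or_gt 0 t with ht | ht
  · exact key_nonneg v hv hh ht
  · have heq : ∫ x in (t - h)..(t + h), gaussianPDFReal 0 v x
        = ∫ x in (-t - h)..(-t + h), gaussianPDFReal 0 v x := by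
      have h0 : ∫ x in (t - h)..(t + h), gaussianPDFReal 0 v x
          = ∫ x in (t - h)..(t + h), gaussianPDFReal 0 v (-x) := by
        simp_rw [g_even v]
      rw [h0, intervalIntegral.integral_comp_neg]
      congr 1 <;> ring
    rw [heq]
    exact key_nonneg v hv hh (by linarith)

end Aux

/-- The overall accuracy of the Gaussian thresholding attack,
(1 − Φ₁(α))/2 + Φ₂(α)/2 with means m and m − c, is maximized at the midpoint
threshold α = m − c/2, where it equals the standard Gaussian mass of
(−∞, c/2]. -/
theorem gaussian_threshold_accuracy_max
    (v : NNReal) (hv : 0 < v) (c m : ℝ) (hc : 0 < c) :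
    (∀ α : ℝ,
        (1 - ((gaussianReal m v) (Set.Iic α)).toReal) / 2 +
            ((gaussianReal (m - c) v) (Set.Iic α)).toReal / 2
          ≤ ((gaussianReal 0 v) (Set.Iic (c / 2))).toReal) ∧
      (1 - ((gaussianReal m v) (Set.Iic (m - c / 2))).toReal) / 2 +
          ((gaussianReal (m - c) v) (Set.Iic (m - c / 2))).toReal / 2
        = ((gaussianReal 0 v) (Set.Iic (c / 2))).toReal := by
  have hv' : v ≠ 0 := hv.ne'
  have hvr : 0 < (v : ℝ) := hv
  set g := gaussianPDFReal 0 v with hg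
  have hgint : Integrable g := integrable_gaussianPDFReal 0 v
  have hgnn : ∀ x, 0 ≤ g x := gaussianPDFReal_nonneg 0 v
  have hgtot : ∫ x, g x = 1 := integral_gaussianPDFReal_eq_one 0 hv'
  set F : ℝ → ℝ := fun b => ∫ x in Set.Iic b, g x with hF
  -- value of gaussian measures in terms of F
  have hFval : ∀ (μ b : ℝ), ((gaussianReal μ v) (Set.Iic b)).toReal = F (b - μ) := by
    intro μ b
    have hmap : (gaussianReal 0 v).map (· + μ) = gaussianReal μ v := by
      simpa using gaussianReal_map_add_const (μ := 0) (v := v) μ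
    have hpre : (· + μ) ⁻¹' Set.Iic b = Set.Iic (b - μ) := by
      ext x; simp [Set.mem_Iic, le_sub_iff_add_le]
    rw [← hmap, Measure.map_apply (measurable_add_const μ) measurableSet_Iic, hpre,
      gaussianReal_apply_eq_integral 0 hv', ENNReal.toReal_ofReal]
    exact setIntegral_nonneg measurableSet_Iic fun x _ => hgnn x
  -- symmetry of F
  have hFsym : ∀ b : ℝ, F (-b) + F b = 1 := by
    intro b
    have h1 : F (-b) = ∫ x in Set.Ioi b, g x := by
      have : ∀ x : ℝ, g x = g (-x) := fun x => (g_even v x).symm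
      calc F (-b) = ∫ x in Set.Iic (-b), g (-x) := by
            simp only [hF]; exact setIntegral_congr_fun measurableSet_Iic fun x _ => this x
        _ = ∫ x in Set.Ioi (- -b), g x := integral_comp_neg_Iic (-b) g
        _ = ∫ x in Set.Ioi b, g x := by rw [neg_neg]
    rw [h1, add_comm]
    rw [intervalIntegral.integral_Iic_add_Ioi hgint.integrableOn hgint.integrableOn, hgtot]
  -- differences of F as interval integrals
  have hFdiff : ∀ a b : ℝ, F b - F a = ∫ x in a..b, g x := fun a b =>
    intervalIntegral.integral_Iic_sub_Iic hgint.integrableOn hgint.integrableOn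
  have hhalf : 0 < c / 2 := by linarith
  have hF0 : ((gaussianReal 0 v) (Set.Iic (c / 2))).toReal = F (c / 2) := by
    rw [hFval 0 (c / 2), sub_zero]
  constructor
  · intro α
    rw [hFval m α, hFval (m - c) α, hF0]
    have hα : α - (m - c) = (α - m) + c := by ring
    rw [hα]
    set a := α - m with ha
    have hkey := key v hvr hhalf (a + c / 2)
    have e1 : a + c / 2 - c / 2 = a := by ring
    have e2 : a + c / 2 + c / 2 = a + c := by ring
    rw [e1, e2] at hkey
    rw [← hg] at hkey
    have d1 : F (a + c) - F a = ∫ x in a..(a + c), g x := hFdiff a (a + c)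
    have d2 : F (c / 2) - F (-(c / 2)) = ∫ x in (-(c / 2))..(c / 2), g x :=
      hFdiff (-(c / 2)) (c / 2)
    have hs := hFsym (c / 2)
    linarith
  · rw [hFval m (m - c / 2), hFval (m - c) (m - c / 2), hF0]
    have e1 : m - c / 2 - m = -(c / 2) := by ring
    have e2 : m - c / 2 - (m - c) = c / 2 := by ring
    rw [e1, e2]
    have hs := hFsym (c / 2)
    linarith
end

section
/- For every real ε ≥ 0, the paper's accuracy upper bound satisfies the chain (1 + e^{−ε})⁻¹ ≤ min(1/2 + ε/4, 1 − e^{−ε}/2), and both inequalities are strict for ε > 0. -/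
private lemma aux_hasDeriv (x : ℝ) :
    HasDerivAt (fun x : ℝ => x * Real.exp x + x + 2 - 2 * Real.exp x)
      (x * Real.exp x - Real.exp x + 1) x := by
  have h1 : HasDerivAt (fun x : ℝ => x * Real.exp x) (1 * Real.exp x + x * Real.exp x) x :=
    (hasDerivAt_id x).mul (Real.hasDerivAt_exp x)
  have h2 : HasDerivAt (fun x : ℝ => 2 * Real.exp x) (2 * Real.exp x) x :=
    (Real.hasDerivAt_exp x).const_mul 2
  have : HasDerivAt (fun x : ℝ => x * Real.exp x + x + 2 - 2 * Real.exp x)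
      (1 * Real.exp x + x * Real.exp x + 1 - 2 * Real.exp x) x :=
    ((h1.add (hasDerivAt_id x)).add_const 2).sub h2
  convert this using 1
  ring

private lemma aux_strictMono :
    StrictMonoOn (fun x : ℝ => x * Real.exp x + x + 2 - 2 * Real.exp x) (Set.Ici 0) := by
  apply strictMonoOn_of_deriv_pos (convex_Ici 0)
  · exact (Continuous.continuousOn (by continuity))
  · intro x hx
    rw [interior_Ici] at hx
    rw [(aux_hasDeriv x).deriv]
    have h := Real.add_one_lt_exp (x := -x) (neg_ne_zero.2 (ne_of_gt hx))
    have hE : 0 < Real.exp x := Real.exp_pos x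
    have h3 : Real.exp (-x) * Real.exp x = 1 := by rw [← Real.exp_add]; simp
    nlinarith [mul_lt_mul_of_pos_right h hE]

private lemma key_ge (ε : ℝ) (hε : 0 ≤ ε) :
    2 * Real.exp ε ≤ ε * Real.exp ε + ε + 2 := by
  rcases eq_or_lt_of_le hε with h | h
  · subst h; simp
  · have := aux_strictMono (Set.self_mem_Ici) (Set.mem_Ici.2 hε) h
    simp only [Real.exp_zero] at this
    nlinarith

private lemma key_gt (ε : ℝ) (hε : 0 < ε) :
    2 * Real.exp ε < ε * Real.exp ε + ε + 2 := by
  have := aux_strictMono (Set.self_mem_Ici) (Set.mem_Ici.2 hε.le) hε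
  simp only [Real.exp_zero] at this
  nlinarith

/-- The paper's accuracy bound is at most the minimum of the two previous
bounds, strictly so for ε > 0. -/
theorem paper_bound_tighter (ε : ℝ) (hε : 0 ≤ ε) :
    (1 + Real.exp (-ε))⁻¹ ≤ min (1 / 2 + ε / 4) (1 - Real.exp (-ε) / 2) ∧
      (0 < ε → (1 + Real.exp (-ε))⁻¹ < min (1 / 2 + ε / 4) (1 - Real.exp (-ε) / 2)) := by
  set t := Real.exp (-ε) with ht
  have htpos : 0 < t := Real.exp_pos _
  have ht1 : t ≤ 1 := Real.exp_le_one_iff.2 (by linarith)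
  have hden : 0 < 1 + t := by linarith
  have hmul : t * Real.exp ε = 1 := by
    rw [ht, ← Real.exp_add]; simp
  have hEpos : 0 < Real.exp ε := Real.exp_pos ε
  constructor
  · rw [le_min_iff]
    constructor
    · rw [inv_le_iff_one_le_mul₀ hden]
      have h := key_ge ε hε
      nlinarith
    · rw [inv_le_iff_one_le_mul₀ hden]
      nlinarith
  · intro hεpos
    have ht1' : t < 1 := by
      rw [ht]; exact Real.exp_lt_one_iff.2 (by linarith)
    rw [lt_min_iff]
    constructor
    · rw [inv_lt_iff_one_lt_mul₀ hden]
      have h := key_gt ε hεpos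
      nlinarith
    · rw [inv_lt_iff_one_lt_mul₀ hden]
      nlinarith
end
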